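/- arXiv:2401.10236 — 2 statements merged into one kernel-verified Lean document; each statement's English description precedes it below -/
import Mathlib

section
/- If P and Q are symmetric positive definite matrices, then there exists an invertible matrix T such that T P Tᵀ = (T⁻¹)ᵀ Q T⁻¹ = Σ, where Σ is diagonal with positive entries (the balancing transformation); moreover the diagonal entries of Σ are the square roots of the eigenvalues of PQ. -/
open Matrix

/-- Balancing transformation: if `P` and `Q` are symmetric positive definite, there is an
invertible `T` with `T P Tᵀ = (T⁻¹)ᵀ Q T⁻¹ = Σ` diagonal with positive entries, and the
diagonal entries of `Σ` are the square roots of the eigenvalues of `P Q`. -/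
theorem balancing_transformation_exists {N : ℕ}
    (P Q : Matrix (Fin N) (Fin N) ℝ) (hP : P.PosDef) (hQ : Q.PosDef) :
    ∃ (T : Matrix (Fin N) (Fin N) ℝ) (d : Fin N → ℝ),
      IsUnit T ∧ (∀ i, 0 < d i) ∧
      T * P * Tᵀ = Matrix.diagonal d ∧
      (T⁻¹)ᵀ * Q * T⁻¹ = Matrix.diagonal d ∧
      spectrum ℝ (P * Q) = Set.range fun i => d i ^ 2 := by
  classical
  open scoped MatrixOrder in
  set L : Matrix (Fin N) (Fin N) ℝ := CFC.sqrt P with hLdef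
  have hLherm : Lᴴ = L := by
    open scoped MatrixOrder in exact (CFC.sqrt_nonneg P).posSemidef.1
  have hLsymm : Lᵀ = L := hLherm
  have hLL : L * L = P := by
    open scoped MatrixOrder in exact CFC.sqrt_mul_sqrt_self P hP.posSemidef.nonneg
  have hLdet : IsUnit L.det := by
    have h2 : L.det * L.det = P.det := by rw [← det_mul, hLL]
    have hp : P.det ≠ 0 := hP.det_pos.ne'
    have hne : L.det ≠ 0 := fun h => hp (by rw [← h2, h, zero_mul])
    exact hne.isUnit
  have hLu : IsUnit L := (Matrix.isUnit_iff_isUnit_det _).2 hLdet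
  have hLinv : L * L⁻¹ = 1 := Matrix.mul_nonsing_inv _ hLdet
  have hLinv' : L⁻¹ * L = 1 := Matrix.nonsing_inv_mul _ hLdet
  have hM : (L * Q * L).PosDef := by
    refine Matrix.PosDef.of_dotProduct_mulVec_pos ?_ fun x hx => ?_
    · have := isHermitian_conjTranspose_mul_mul L hQ.1
      rwa [hLherm] at this
    · have hLx : L *ᵥ x ≠ 0 := by
        intro h
        apply hx
        have := congrArg (fun y => L⁻¹ *ᵥ y) h
        simpa [Matrix.mulVec_mulVec, hLinv'] using this
      have key := hQ.dotProduct_mulVec_pos hLx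
      have hrw : star x ⬝ᵥ (L * Q * L) *ᵥ x = star (L *ᵥ x) ⬝ᵥ Q *ᵥ (L *ᵥ x) := by
        rw [star_mulVec, hLherm, ← Matrix.mulVec_mulVec, ← Matrix.mulVec_mulVec,
          Matrix.dotProduct_mulVec]
      rwa [hrw]
  set μ : Fin N → ℝ := hM.1.eigenvalues with hμdef
  have hμpos : ∀ i, 0 < μ i := hM.eigenvalues_pos
  set U : Matrix (Fin N) (Fin N) ℝ := (hM.1.eigenvectorUnitary : Matrix (Fin N) (Fin N) ℝ)
    with hUdef
  have hUstar : star U = Uᵀ := rfl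
  have hUU : Uᵀ * U = 1 := by
    rw [← hUstar]; exact (Matrix.mem_unitaryGroup_iff').mp hM.1.eigenvectorUnitary.2
  have hspec : L * Q * L = U * Matrix.diagonal μ * Uᵀ := by
    have := hM.1.spectral_theorem
    rw [← hUstar]; simpa [Unitary.conjStarAlgAut_apply] using this
  set d : Fin N → ℝ := fun i => Real.sqrt (μ i) with hddef
  have hdpos : ∀ i, 0 < d i := fun i => Real.sqrt_pos.mpr (hμpos i)
  have hdsq : ∀ i, d i ^ 2 = μ i := fun i => Real.sq_sqrt (hμpos i).le
  set e : Fin N → ℝ := fun i => Real.sqrt (d i) with hedef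
  have hepos : ∀ i, 0 < e i := fun i => Real.sqrt_pos.mpr (hdpos i)
  have hesq : ∀ i, e i * e i = d i := fun i => Real.mul_self_sqrt (hdpos i).le
  set T : Matrix (Fin N) (Fin N) ℝ := Matrix.diagonal e * Uᵀ * L⁻¹ with hTdef
  set S : Matrix (Fin N) (Fin N) ℝ := L * U * Matrix.diagonal (fun i => (e i)⁻¹) with hSdef
  have hTS : T * S = 1 := by
    rw [hTdef, hSdef]
    trans Matrix.diagonal e * (Uᵀ * ((L⁻¹ * L) * U)) * Matrix.diagonal fun i => (e i)⁻¹
    · noncomm_ring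
    rw [hLinv', one_mul, hUU, mul_one, Matrix.diagonal_mul_diagonal]
    rw [show (fun i => e i * (e i)⁻¹) = fun _ => (1 : ℝ) from
      funext fun i => mul_inv_cancel₀ (hepos i).ne', Matrix.diagonal_one]
  have hTu : IsUnit T := by
    refine (Matrix.isUnit_iff_isUnit_det _).2 ?_
    exact IsUnit.of_mul_eq_one S.det (by rw [← det_mul, hTS, det_one])
  have hTinv : T⁻¹ = S := Matrix.inv_eq_right_inv hTS
  refine ⟨T, d, hTu, hdpos, ?_, ?_, ?_⟩
  · rw [hTdef, ← hLL]
    have hLiT : L⁻¹ᵀ = L⁻¹ := by rw [Matrix.transpose_nonsing_inv, hLsymm]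
    rw [Matrix.transpose_mul, Matrix.transpose_mul, hLiT, Matrix.transpose_transpose,
      Matrix.diagonal_transpose]
    trans Matrix.diagonal e * (Uᵀ * ((L⁻¹ * L) * ((L * L⁻¹) * U))) * Matrix.diagonal e
    · noncomm_ring
    rw [hLinv', hLinv, one_mul, one_mul, hUU, mul_one, Matrix.diagonal_mul_diagonal]
    exact congrArg _ (funext hesq)
  · rw [hTinv, hSdef]
    rw [Matrix.transpose_mul, Matrix.transpose_mul, Matrix.diagonal_transpose, hLsymm]
    trans Matrix.diagonal (fun i => (e i)⁻¹) * (Uᵀ * (L * Q * L) * U) *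
      Matrix.diagonal fun i => (e i)⁻¹
    · noncomm_ring
    rw [hspec]
    trans Matrix.diagonal (fun i => (e i)⁻¹) * ((Uᵀ * U) * Matrix.diagonal μ * (Uᵀ * U)) *
      Matrix.diagonal fun i => (e i)⁻¹
    · noncomm_ring
    rw [hUU, one_mul, mul_one, Matrix.diagonal_mul_diagonal, Matrix.diagonal_mul_diagonal]
    refine congrArg _ (funext fun i => ?_)
    have hne : e i ≠ 0 := (hepos i).ne'
    rw [← hdsq i, sq, ← hesq i]
    field_simp
  · have hconj : P * Q = L * (L * Q * L) * L⁻¹ := by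
      rw [← hLL]
      trans L * L * Q * (L * L⁻¹)
      · rw [hLinv, mul_one]
      · noncomm_ring
    have hu : spectrum ℝ (P * Q) = spectrum ℝ (L * Q * L) := by
      rw [hconj]
      have h : L * (L * Q * L) * L⁻¹
          = (hLu.unit : Matrix (Fin N) (Fin N) ℝ) * (L * Q * L) *
            ((hLu.unit⁻¹ : (Matrix (Fin N) (Fin N) ℝ)ˣ) : Matrix (Fin N) (Fin N) ℝ) := by
        rw [Matrix.coe_units_inv, IsUnit.unit_spec]
      rw [h, spectrum.units_conjugate]
    rw [hu, hM.1.spectrum_real_eq_range_eigenvalues]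
    exact congrArg Set.range (funext fun i => (hdsq i).symm)
end

section
/- If P solves A P + P Aᵀ = -BBᵀ with A Hurwitz and B ∈ ℝ^{N×p}, then the number of eigenvalues of P exceeding any τ > 0 can be bounded: specifically, since range(P) ⊆ range([B, AB, …, A^{N-1}B]), rank(P) ≤ min(N, p·deg(m_A)) where m_A is the minimal polynomial of A. -/
open Matrix

open Polynomial

section Helpers

/-- A linear map sending a matrix to `M.mulVec b`. -/
noncomputable def mulVecRight {m n : Type*} [Fintype n] (b : n → ℝ) :
    Matrix m n ℝ →ₗ[ℝ] (m → ℝ) where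
  toFun M := M.mulVec b
  map_add' M N := Matrix.add_mulVec M N b
  map_smul' c M := Matrix.smul_mulVec c M b

@[simp] lemma mulVecRight_apply {m n : Type*} [Fintype n] (b : n → ℝ)
    (M : Matrix m n ℝ) : mulVecRight b M = M.mulVec b := rfl

/-- Any power of `A` lies in the span of the first `d` powers, where `d` is the degree of
a monic polynomial annihilating `A`. -/
lemma pow_mem_span_pow {n : ℕ} (A : Matrix (Fin n) (Fin n) ℝ) (q : ℝ[X]) (hq : q.Monic)
    (h0 : aeval A q = 0) (k : ℕ) :
    A ^ k ∈ Submodule.span ℝ (Set.range fun i : Fin q.natDegree => A ^ (i : ℕ)) := by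
  by_cases h1 : q = 1
  · have : (1 : Matrix (Fin n) (Fin n) ℝ) = 0 := by simpa [h1] using h0
    have hz : A ^ k = 0 := by
      calc A ^ k = A ^ k * 1 := (mul_one _).symm
      _ = 0 := by rw [this, mul_zero]
    rw [hz]; exact Submodule.zero_mem _
  · have hk : A ^ k = aeval A (X ^ k %ₘ q) := by
      have := Polynomial.aeval_modByMonic_eq_self_of_root h0 (p := X ^ k)
      simpa using this.symm
    have hdeg : (X ^ k %ₘ q).natDegree < q.natDegree :=
      Polynomial.natDegree_modByMonic_lt _ hq h1
    rw [hk, Polynomial.aeval_eq_sum_range' hdeg]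
    apply Submodule.sum_mem
    intro i hi
    apply Submodule.smul_mem
    exact Submodule.subset_span ⟨⟨i, Finset.mem_range.mp hi⟩, rfl⟩

lemma eval_charpoly_det {n : Type*} [Fintype n] [DecidableEq n] {R : Type*} [CommRing R]
    (M : Matrix n n R) (a : R) :
    (M.charpoly).eval a = det (Matrix.scalar n a - M) := by
  rw [Matrix.charpoly, eval_det, matPolyEquiv_charmatrix]
  simp

lemma mem_spectrum_of_det_eq_zero {n : Type*} [Fintype n] [DecidableEq n]
    (M : Matrix n n ℂ) (a : ℂ) (h : det (Matrix.scalar n a - M) = 0) :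
    a ∈ spectrum ℂ M := by
  rw [spectrum.mem_iff]
  intro hu
  rw [Matrix.isUnit_iff_isUnit_det] at hu
  rw [show algebraMap ℂ (Matrix n n ℂ) a = Matrix.scalar n a from rfl] at hu
  rw [h] at hu
  simp at hu

lemma det_aeval_neg_charpoly_ne_zero {N : ℕ} (A : Matrix (Fin N) (Fin N) ℝ)
    (hA : ∀ μ ∈ spectrum ℂ (A.map (algebraMap ℝ ℂ)), μ.re < 0) :
    det (aeval (-A) (Aᵀ.charpoly)) ≠ 0 := by
  set f := algebraMap ℝ ℂ with hf
  intro hdet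
  have hmapdet : det ((aeval (-A) (Aᵀ.charpoly)).map f) = 0 := by
    rw [show (aeval (-A) (Aᵀ.charpoly)).map (f : ℝ → ℂ)
        = (f : ℝ →+* ℂ).mapMatrix (aeval (-A) (Aᵀ.charpoly)) from rfl,
      ← RingHom.map_det, hdet, map_zero]
  have hmap : (aeval (-A) (Aᵀ.charpoly)).map f
      = aeval (-(A.map f)) ((Aᵀ.charpoly).map f) := by
    have h1 : (AlgHom.mapMatrix (Algebra.ofId ℝ ℂ)) (aeval (-A) (Aᵀ.charpoly))
        = aeval ((AlgHom.mapMatrix (Algebra.ofId ℝ ℂ)) (-A)) (Aᵀ.charpoly) :=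
      (Polynomial.aeval_algHom_apply _ _ _).symm
    have h2 : (AlgHom.mapMatrix (Algebra.ofId ℝ ℂ)) (-A) = -(A.map f) := by
      ext i j; simp [AlgHom.mapMatrix_apply, Algebra.ofId, hf]
    have h3 : (AlgHom.mapMatrix (Algebra.ofId ℝ ℂ)) (aeval (-A) (Aᵀ.charpoly))
        = (aeval (-A) (Aᵀ.charpoly)).map f := rfl
    rw [← h3, h1, h2, ← Polynomial.aeval_map_algebraMap ℂ]
  set qC := (Aᵀ.charpoly).map f with hqC
  have hmonic : qC.Monic := (Aᵀ.charpoly_monic).map f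
  have hfact : qC = (qC.roots.toList.map fun a => X - C a).prod := by
    conv_lhs => rw [(IsAlgClosed.splits qC).eq_prod_roots_of_monic hmonic]
    rw [← Multiset.prod_coe, ← Multiset.map_coe, Multiset.coe_toList]
  have hdet2 : (qC.roots.toList.map fun a => det (-(A.map f) - Matrix.scalar (Fin N) a)).prod
      = 0 := by
    have haev : aeval (-(A.map f)) qC
        = (qC.roots.toList.map fun a => (-(A.map f) - Matrix.scalar (Fin N) a)).prod := by
      conv_lhs => rw [hfact]
      rw [map_list_prod (aeval (-(A.map f)) : ℂ[X] →ₐ[ℂ] Matrix (Fin N) (Fin N) ℂ)]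
      rw [List.map_map]
      congr 1
      apply List.map_congr_left
      intro a _
      show aeval (-(A.map f)) (X - C a) = _
      rw [map_sub, Polynomial.aeval_X, Polynomial.aeval_C]
      rfl
    rw [hmap] at hmapdet
    rw [haev] at hmapdet
    rw [← hmapdet]
    have := map_list_prod (Matrix.detMonoidHom (n := Fin N) (R := ℂ))
      (List.map (fun a => -(A.map f) - Matrix.scalar (Fin N) a) qC.roots.toList)
    simpa [List.map_map, Function.comp] using this.symm
  have hzero : (0:ℂ) ∈ qC.roots.toList.map fun a => det (-(A.map f) - Matrix.scalar (Fin N) a) :=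
    List.prod_eq_zero_iff.mp hdet2
  obtain ⟨a, ha, hdeta⟩ := List.mem_map.mp hzero
  have ha' : a ∈ qC.roots := Multiset.mem_toList.mp ha
  have haroot : qC.eval a = 0 := Polynomial.isRoot_of_mem_roots ha'
  have haspec : a ∈ spectrum ℂ (A.map f) := by
    apply mem_spectrum_of_det_eq_zero
    have hq2 : qC = ((A.map f)ᵀ).charpoly := by
      rw [hqC, ← Matrix.charpoly_map, Matrix.transpose_map]
    rw [hq2, eval_charpoly_det] at haroot
    have htr : (Matrix.scalar (Fin N) a - (A.map f)ᵀ) = (Matrix.scalar (Fin N) a - A.map f)ᵀ := by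
      rw [Matrix.transpose_sub]
      congr 1
      rw [Matrix.scalar_apply, Matrix.diagonal_transpose]
    rw [htr, Matrix.det_transpose] at haroot
    exact haroot
  have hre : a.re < 0 := hA a haspec
  have hnegspec : (-a) ∈ spectrum ℂ (A.map f) := by
    apply mem_spectrum_of_det_eq_zero
    have hm : Matrix.scalar (Fin N) (-a) - A.map f = -(A.map f) - Matrix.scalar (Fin N) a := by
      rw [map_neg]
      try abel
    rw [hm, hdeta]
  have : (-a).re < 0 := hA _ hnegspec
  simp at this
  linarith

end Helpers

/-- Low numerical rank of the controllability Gramian: if `P` solves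
`A P + P Aᵀ = -B Bᵀ` with `A` Hurwitz, then `range P` is contained in the range of the
controllability matrix `[B, AB, …, A^{N-1}B]`, and `rank P ≤ min(N, p · deg m_A)` where
`m_A` is the minimal polynomial of `A`. -/
theorem gramian_rank_bound_min_poly {N p : ℕ}
    (A P : Matrix (Fin N) (Fin N) ℝ) (B : Matrix (Fin N) (Fin p) ℝ)
    (hA : ∀ μ ∈ spectrum ℂ (A.map (algebraMap ℝ ℂ)), μ.re < 0)
    (hP : A * P + P * Aᵀ = -(B * Bᵀ)) :
    LinearMap.range P.mulVecLin ≤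
        Submodule.span ℝ
          {v | ∃ (k : Fin N) (j : Fin p), v = (A ^ (k : ℕ)).mulVec fun i => B i j} ∧
      P.rank ≤ min N (p * (minpoly ℝ A).natDegree) := by
  classical
  set S : Submodule ℝ (Fin N → ℝ) := Submodule.span ℝ
    {v | ∃ (k : Fin N) (j : Fin p), v = (A ^ (k : ℕ)).mulVec fun i => B i j} with hS
  -- transposed Lyapunov equation
  have hPT : Pᵀ * Aᵀ + A * Pᵀ = -(B * Bᵀ) := by
    have h := congrArg Matrix.transpose hP
    simpa [Matrix.transpose_add, Matrix.transpose_mul, Matrix.transpose_neg] using h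
  -- the key claim: vectors annihilated by all `Bᵀ (Aᵀ)^k` are annihilated by `Pᵀ`
  have C1 : ∀ w : Fin N → ℝ, (∀ k : ℕ, Bᵀ.mulVec ((Aᵀ ^ k).mulVec w) = 0) →
      Pᵀ.mulVec w = 0 := by
    have step : ∀ w : Fin N → ℝ, (∀ k : ℕ, Bᵀ.mulVec ((Aᵀ ^ k).mulVec w) = 0) →
        Pᵀ.mulVec (Aᵀ.mulVec w) = (-A).mulVec (Pᵀ.mulVec w) := by
      intro w hw
      have h0 : Bᵀ.mulVec w = 0 := by simpa using hw 0
      have h := congrArg (fun M : Matrix (Fin N) (Fin N) ℝ => M.mulVec w) hPT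
      simp only [Matrix.add_mulVec, Matrix.neg_mulVec] at h
      rw [← Matrix.mulVec_mulVec, ← Matrix.mulVec_mulVec, ← Matrix.mulVec_mulVec] at h
      rw [h0, Matrix.mulVec_zero, neg_zero] at h
      have := eq_neg_of_add_eq_zero_left h
      rw [this, Matrix.neg_mulVec]
    have inv : ∀ w : Fin N → ℝ, (∀ k : ℕ, Bᵀ.mulVec ((Aᵀ ^ k).mulVec w) = 0) →
        (∀ k : ℕ, Bᵀ.mulVec ((Aᵀ ^ k).mulVec (Aᵀ.mulVec w)) = 0) := by
      intro w hw k
      rw [Matrix.mulVec_mulVec w (Aᵀ ^ k) Aᵀ, ← pow_succ]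
      exact hw (k + 1)
    have key : ∀ (n : ℕ) (w : Fin N → ℝ), (∀ k : ℕ, Bᵀ.mulVec ((Aᵀ ^ k).mulVec w) = 0) →
        Pᵀ.mulVec ((Aᵀ ^ n).mulVec w) = ((-A) ^ n).mulVec (Pᵀ.mulVec w) := by
      intro n
      induction n with
      | zero => intro w hw; simp [Matrix.one_mulVec]
      | succ n ih =>
        intro w hw
        have h1 : (Aᵀ ^ (n+1)).mulVec w = (Aᵀ ^ n).mulVec (Aᵀ.mulVec w) := by
          rw [Matrix.mulVec_mulVec, ← pow_succ]
        rw [h1, ih _ (inv w hw), step w hw, Matrix.mulVec_mulVec, ← pow_succ]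
    intro w hw
    -- sum over the characteristic polynomial of `Aᵀ`
    set q := (Aᵀ).charpoly with hq
    have hsum : (aeval (-A) q).mulVec (Pᵀ.mulVec w) = 0 := by
      have e1 : (aeval Aᵀ q).mulVec w
          = ∑ i ∈ Finset.range (q.natDegree + 1), q.coeff i • ((Aᵀ ^ i).mulVec w) := by
        rw [Polynomial.aeval_eq_sum_range, show ∀ M : Matrix (Fin N) (Fin N) ℝ,
          M.mulVec w = mulVecRight w M from fun _ => rfl, map_sum]
        refine Finset.sum_congr rfl fun i _ => ?_
        rw [_root_.map_smul]
        rfl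
      have e2 : (aeval (-A) q).mulVec (Pᵀ.mulVec w)
          = ∑ i ∈ Finset.range (q.natDegree + 1),
              q.coeff i • (((-A) ^ i).mulVec (Pᵀ.mulVec w)) := by
        rw [Polynomial.aeval_eq_sum_range, show ∀ M : Matrix (Fin N) (Fin N) ℝ,
          M.mulVec (Pᵀ.mulVec w) = mulVecRight (Pᵀ.mulVec w) M from fun _ => rfl, map_sum]
        refine Finset.sum_congr rfl fun i _ => ?_
        rw [_root_.map_smul]
        rfl
      have e3 : Pᵀ.mulVec ((aeval Aᵀ q).mulVec w) = 0 := by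
        rw [Matrix.aeval_self_charpoly, Matrix.zero_mulVec, Matrix.mulVec_zero]
      rw [e1] at e3
      rw [e2]
      rw [show Pᵀ.mulVec (∑ i ∈ Finset.range (q.natDegree + 1),
          q.coeff i • ((Aᵀ ^ i).mulVec w))
        = ∑ i ∈ Finset.range (q.natDegree + 1),
            q.coeff i • (Pᵀ.mulVec ((Aᵀ ^ i).mulVec w)) from by
          rw [← Matrix.mulVecLin_apply, map_sum]
          exact Finset.sum_congr rfl fun i _ => by
            rw [_root_.map_smul, Matrix.mulVecLin_apply]] at e3
      rw [← e3]
      exact Finset.sum_congr rfl fun i _ => by rw [key i w hw]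
    have hdet := det_aeval_neg_charpoly_ne_zero A hA
    have hU : IsUnit (aeval (-A) q) :=
      (Matrix.isUnit_iff_isUnit_det _).mpr (isUnit_iff_ne_zero.mpr hdet)
    have hinj := Matrix.mulVec_injective_iff_isUnit.mpr hU
    have : (aeval (-A) q).mulVec (Pᵀ.mulVec w) = (aeval (-A) q).mulVec 0 := by
      rw [hsum, Matrix.mulVec_zero]
    exact hinj this
  -- all powers of A applied to columns of B are in S
  have genMem : ∀ (k : ℕ) (j : Fin p), (A ^ k).mulVec (fun i => B i j) ∈ S := by
    intro k j
    have hpow := pow_mem_span_pow A A.charpoly A.charpoly_monic A.aeval_self_charpoly k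
    have happ := Submodule.apply_mem_span_image_of_mem_span
      (mulVecRight (fun i => B i j)) hpow
    refine Submodule.span_le.mpr ?_ happ
    rintro v ⟨_, ⟨i, rfl⟩, rfl⟩
    apply Submodule.subset_span
    have hdeg : A.charpoly.natDegree = N := by
      rw [Matrix.charpoly_natDegree_eq_dim, Fintype.card_fin]
    have hiN : (i : ℕ) < N := lt_of_lt_of_le i.2 (le_of_eq hdeg)
    exact ⟨⟨i, hiN⟩, j, rfl⟩
  -- part 1
  have part1 : LinearMap.range P.mulVecLin ≤ S := by
    rintro x ⟨v, rfl⟩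
    show P.mulVec v ∈ S
    set e := WithLp.linearEquiv 2 ℝ (Fin N → ℝ) with he
    set S' : Submodule ℝ (EuclideanSpace ℝ (Fin N)) := S.comap e.toLinearMap with hS'
    have hSS' : ∀ y : Fin N → ℝ, e.symm y ∈ S' ↔ y ∈ S := by
      intro y
      rw [hS', Submodule.mem_comap]
      simp
    rw [← hSS']
    rw [← Submodule.orthogonal_orthogonal S']
    rw [Submodule.mem_orthogonal]
    intro w hw
    have hwS : ∀ y ∈ S, (e w) ⬝ᵥ y = 0 := by
      intro y hy
      have h1 : e.symm y ∈ S' := (hSS' y).mpr hy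
      have h2 := (Submodule.mem_orthogonal S' w).mp hw _ h1
      rw [show (inner ℝ (e.symm y) w : ℝ) = ∑ i, y i * (e w) i from by
        simp [PiLp.inner_apply, RCLike.inner_apply]; exact Finset.sum_congr rfl fun i _ => mul_comm _ _] at h2
      rw [show (e w) ⬝ᵥ y = ∑ i, y i * (e w) i from by
        simp [dotProduct, mul_comm]]
      exact h2
    have hwk : ∀ k : ℕ, Bᵀ.mulVec ((Aᵀ ^ k).mulVec (e w)) = 0 := by
      intro k
      funext j
      have h0 := hwS _ (genMem k j)
      show (fun i => B i j) ⬝ᵥ ((Aᵀ ^ k).mulVec (e w)) = 0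
      rw [← Matrix.transpose_pow, Matrix.mulVec_transpose, dotProduct_comm,
        ← Matrix.dotProduct_mulVec]
      exact h0
    have hPw := C1 (e w) hwk
    show (inner ℝ w (e.symm (P.mulVec v)) : ℝ) = 0
    rw [show (inner ℝ w (e.symm (P.mulVec v)) : ℝ) = (e w) ⬝ᵥ (P.mulVec v) from by
      simp [PiLp.inner_apply, RCLike.inner_apply]; simp only [dotProduct]; exact Finset.sum_congr rfl fun i _ => mul_comm _ _]
    rw [Matrix.dotProduct_mulVec, ← Matrix.mulVec_transpose, hPw, zero_dotProduct]
  refine ⟨part1, le_min (Matrix.rank_le_height P) ?_⟩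
  -- rank bound via the minimal polynomial
  set d := (minpoly ℝ A).natDegree with hd
  set T : Set (Fin N → ℝ) :=
    Set.range (fun x : Fin d × Fin p => (A ^ (x.1 : ℕ)).mulVec (fun i => B i x.2)) with hT
  have hsub : S ≤ Submodule.span ℝ T := by
    rw [hS]
    apply Submodule.span_le.mpr
    rintro v ⟨k, j, rfl⟩
    have hint : IsIntegral ℝ A := IsIntegral.of_finite ℝ A
    have hpow := pow_mem_span_pow A (minpoly ℝ A) (minpoly.monic hint)
      (minpoly.aeval ℝ A) (k : ℕ)
    have happ := Submodule.apply_mem_span_image_of_mem_span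
      (mulVecRight (fun i => B i j)) hpow
    refine Submodule.span_le.mpr ?_ happ
    rintro u ⟨_, ⟨i, rfl⟩, rfl⟩
    apply Submodule.subset_span
    exact ⟨(i, j), rfl⟩
  have hrange : LinearMap.range P.mulVecLin ≤ Submodule.span ℝ T := le_trans part1 hsub
  have h1 : P.rank ≤ Module.finrank ℝ (Submodule.span ℝ T) := by
    rw [Matrix.rank]
    exact Submodule.finrank_mono hrange
  have h2 : Module.finrank ℝ (Submodule.span ℝ T) ≤ p * d := by
    have := finrank_span_le_card (R := ℝ) T
    rw [Set.toFinset_card] at this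
    refine le_trans this ?_
    have := Fintype.card_range_le (fun x : Fin d × Fin p => (A ^ (x.1 : ℕ)).mulVec (fun i => B i x.2))
    simpa [Fintype.card_prod, mul_comm] using this
  exact le_trans h1 h2
end
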